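/- Let a and b be coprime positive integers with ab odd, and let p be an odd prime such that p ≠ ab, p ≠ ab + 1, and p = x² + aby² for some integers x, y. Then n = (a+b)(p−1)/8 is a nonnegative integer and (−1)^{((ab+1)/2)·y} · (4x² − 2p) = λ(a, b; n+1). -/

import Mathlib

private def sg (m : ℤ) : ℤ := if m % 4 = 1 then 1 else -1

private lemma sg_eq (m : ℤ) : sg m = 1 ∨ sg m = -1 := by unfold sg; split <;> simp

private lemma sg_sq (m : ℤ) : sg m ^ 2 = 1 := by rcases sg_eq m with h | h <;> rw [h] <;> ring

private lemma sg_spec {m : ℤ} (hm : m % 2 = 1) : (sg m * m) % 4 = 1 := by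
  unfold sg; split <;> omega

private lemma sg_mul_sg {m m' : ℤ} (hm : m % 2 = 1) (hm' : m' % 2 = 1) :
    sg m * sg m' = if (m + m') % 4 = 0 then -1 else 1 := by
  unfold sg; split_ifs <;> omega

private lemma sg_eq_of {m X s : ℤ} (hm : m % 2 = 1) (hs : s = 1 ∨ s = -1)
    (he : X = s * m) (h4 : X % 4 = 1) : sg m * m = X := by
  subst he
  rcases hs with rfl | rfl <;> unfold sg <;> split <;> omega

private lemma neg_one_pow_natAbs (k : ℤ) :
    (-1 : ℤ) ^ k.natAbs = if k % 2 = 0 then 1 else -1 := by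
  split_ifs with h
  · exact Even.neg_one_pow (by rwa [Int.natAbs_even, Int.even_iff])
  · exact Odd.neg_one_pow (by rw [Int.natAbs_odd, Int.odd_iff]; omega)

private lemma oddmul {u : ℤ} (hu : u % 2 = 1) (m : ℤ) : (u * m) % 2 = m % 2 := by
  obtain ⟨c, hc⟩ : ∃ c, u = 2*c + 1 := ⟨u/2, by omega⟩
  have : u * m = 2*(c*m) + m := by rw [hc]; ring
  omega

private lemma oddmul' {u : ℤ} (hu : u % 2 = 1) (m : ℤ) : (m * u) % 2 = m % 2 := by
  rw [mul_comm]; exact oddmul hu m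

private lemma odd_sq {m : ℤ} (h : m % 2 = 1) : m^2 % 8 = 1 := by
  obtain ⟨k, hk⟩ : ∃ k, m = 2*k + 1 := ⟨m/2, by omega⟩
  obtain ⟨j, hj⟩ := Int.even_mul_succ_self k
  have : m^2 = 4*(j+j) + 1 := by rw [hk]; linear_combination 4*hj
  omega

private lemma cast2 {m : ℤ} (h : m % 2 = 1) : (m : ZMod 2) = 1 := by
  have : ((m : ℤ) : ZMod 2) = ((1:ℤ) : ZMod 2) :=
    (ZMod.intCast_eq_intCast_iff _ _ _).mpr (by show m % 2 = 1 % 2; omega)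
  simpa using this

private lemma cast2' {m : ℤ} (h : (m : ZMod 2) = 1) : m % 2 = 1 := by
  have : m ≡ 1 [ZMOD 2] := (ZMod.intCast_eq_intCast_iff _ _ _).mp (by simpa using h)
  have h2 : m % 2 = 1 % 2 := this
  omega

private lemma sign_key {a b x y : ℤ} (hao : a % 2 = 1) (hbo : b % 2 = 1)
    (hxyp : (x + y) % 2 = 1) :
    sg (x + b*y) * sg (x - a*y) = (-1 : ℤ) ^ (((a*b+1)/2) * y).natAbs := by
  have hm : (x + b*y) % 2 = 1 := by have := oddmul hbo y; omega
  have hm' : (x - a*y) % 2 = 1 := by have := oddmul hao y; omega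
  rw [sg_mul_sg hm hm', neg_one_pow_natAbs]
  have hab : (a*b) % 2 = 1 := by have := oddmul hao b; omega
  rcases Int.even_or_odd y with hy | hy
  · -- y even
    obtain ⟨t, ht⟩ := hy
    obtain ⟨w, hw⟩ : ∃ w, b = a + 2*w := ⟨(b-a)/2, by omega⟩
    have hid : b*y - a*y = 4*(w*t) := by rw [hw, ht]; ring
    have hid2 : (a*b+1)/2 * y = 2*((a*b+1)/2 * t) := by rw [ht]; ring
    have hc1 : ¬ ((x + b*y + (x - a*y)) % 4 = 0) := by omega
    have hc2 : (a*b+1)/2 * y % 2 = 0 := by omega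
    rw [if_neg hc1, if_pos hc2]
  · -- y odd
    have hyo : y % 2 = 1 := Int.odd_iff.mp hy
    have hxo : x % 2 = 0 := by omega
    obtain ⟨α, hα⟩ : ∃ α, a = 2*α + 1 := ⟨a/2, by omega⟩
    obtain ⟨β, hβ⟩ : ∃ β, b = 2*β + 1 := ⟨b/2, by omega⟩
    obtain ⟨ξ, hξ⟩ : ∃ ξ, x = 2*ξ := ⟨x/2, by omega⟩
    have hsum : x + b*y + (x - a*y) = 4*ξ + 2*((β-α)*y) := by rw [hα, hβ, hξ]; ring
    have hW : ((β-α)*y) % 2 = (β-α) % 2 := by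
      rw [mul_comm]; exact oddmul hyo _
    have hk : a*b = 4*(α*β) + 2*α + 2*β + 1 := by rw [hα, hβ]; ring
    have hky : ((a*b+1)/2 * y) % 2 = ((a*b+1)/2) % 2 := by
      rw [mul_comm]; exact oddmul hyo _
    by_cases hC : (α + β) % 2 = 0
    · rw [if_pos (by omega), if_neg (by omega)]
    · rw [if_neg (by omega), if_pos (by omega)]

private lemma core {a b : ℤ} (ha : 0 < a) (hb : 0 < b) {p : ℕ} (hp : p.Prime)
    (hpa : ¬ ((p:ℤ) ∣ a)) (hao : a % 2 = 1) (hbo : b % 2 = 1)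
    {x y X Y : ℤ} (hxy : (p:ℤ) = x^2 + a*b*y^2)
    (hXY : a * X^2 + b * Y^2 = (a+b) * (p:ℤ))
    (hX : X % 2 = 1) (hY : Y % 2 = 1) (hxp : (x + y) % 2 = 1)
    (hdvd : (p:ℤ) ∣ (x*Y - a*y*X)) :
    ∃ s t : ℤ, (s = 1 ∨ s = -1) ∧ (t = 1 ∨ t = -1) ∧
      X = s*x - b*(t*y) ∧ Y = s*(a*y) + t*x := by
  have hpp : Prime (p:ℤ) := Nat.prime_iff_prime_int.mp hp
  have hpz : (0:ℤ) < p := by exact_mod_cast hp.pos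
  obtain ⟨t, ht⟩ := hdvd
  have hkey : a * (x*X + b*y*Y)^2 = (p:ℤ)^2 * ((a+b) - b*t^2) := by
    linear_combination (x^2 + a*b*y^2) * hXY - (a+b)*(p:ℤ) * hxy
      - b*(x*Y - a*y*X + (p:ℤ)*t) * ht
  have h1 : (p:ℤ) ∣ (x*X + b*y*Y) := by
    have h2 : (p:ℤ) ∣ a * (x*X + b*y*Y)^2 :=
      ⟨(p:ℤ) * ((a+b) - b*t^2), by rw [hkey]; ring⟩
    rcases hpp.dvd_mul.mp h2 with h | h
    · exact absurd h hpa
    · exact hpp.dvd_of_dvd_pow h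
  obtain ⟨s, hs⟩ := h1
  have hst : a * s^2 + b * t^2 = a + b := by
    have hp2 : (p:ℤ)^2 ≠ 0 := by positivity
    refine mul_left_cancel₀ hp2 ?_
    linear_combination hkey - a*(x*X + b*y*Y + (p:ℤ)*s) * hs
  have hXe : X = s*x - b*(t*y) := by
    refine mul_left_cancel₀ (ne_of_gt hpz) ?_
    linear_combination x * hs - b*y*ht + X * hxy
  have hYe : Y = s*(a*y) + t*x := by
    refine mul_left_cancel₀ (ne_of_gt hpz) ?_
    linear_combination a*y*hs + x*ht + Y * hxy
  -- parity of s, t via ZMod 2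
  have dd : ∀ s t x y : ZMod 2, x + y = 1 → s*x + t*y = 1 → s*y + t*x = 1 →
      s = 1 ∧ t = 1 := by decide
  have cX : ((X : ℤ) : ZMod 2) = (s:ZMod 2)*(x:ZMod 2) + (t:ZMod 2)*(y:ZMod 2) := by
    have := congrArg (fun m : ℤ => (m : ZMod 2)) hXe
    push_cast at this
    rw [cast2 hbo] at this
    rw [this, CharTwo.sub_eq_add]; ring
  have cY : ((Y : ℤ) : ZMod 2) = (s:ZMod 2)*(y:ZMod 2) + (t:ZMod 2)*(x:ZMod 2) := by
    have := congrArg (fun m : ℤ => (m : ZMod 2)) hYe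
    push_cast at this
    rw [cast2 hao] at this
    rw [this]; ring
  have cxy : (x:ZMod 2) + (y:ZMod 2) = 1 := by
    have := cast2 hxp; push_cast at this; exact this
  have := dd s t x y cxy (by rw [← cX]; exact cast2 hX) (by rw [← cY]; exact cast2 hY)
  have hso : s % 2 = 1 := cast2' this.1
  have hto : t % 2 = 1 := cast2' this.2
  -- s^2 = 1 and t^2 = 1
  have hs1 : 1 ≤ s^2 := by
    have h0 : s ≠ 0 := by omega
    have := Int.one_le_abs h0
    nlinarith [sq_abs s]
  have ht1 : 1 ≤ t^2 := by
    have h0 : t ≠ 0 := by omega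
    have := Int.one_le_abs h0
    nlinarith [sq_abs t]
  have e1 : 0 ≤ a*(s^2 - 1) := mul_nonneg (le_of_lt ha) (by linarith)
  have e2 : 0 ≤ b*(t^2 - 1) := mul_nonneg (le_of_lt hb) (by linarith)
  have esum : a*(s^2 - 1) + b*(t^2 - 1) = 0 := by linear_combination hst
  have hseq : s^2 = 1 := by
    have h0 : a*(s^2 - 1) = 0 := by linarith
    rcases mul_eq_zero.mp h0 with h | h
    · exact absurd h (ne_of_gt ha)
    · linarith
  have hteq : t^2 = 1 := by
    have h0 : b*(t^2 - 1) = 0 := by linarith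
    rcases mul_eq_zero.mp h0 with h | h
    · exact absurd h (ne_of_gt hb)
    · linarith
  refine ⟨s, t, ?_, ?_, hXe, hYe⟩
  · exact Int.isUnit_iff.mp (IsUnit.of_mul_eq_one s (by linear_combination hseq))
  · exact Int.isUnit_iff.mp (IsUnit.of_mul_eq_one t (by linear_combination hteq))

private lemma pair_ne {a b x y : ℤ} (hx0 : x ≠ 0) (hby0 : b*y ≠ 0) :
    ((sg (x+b*y) * (x+b*y), sg (x-a*y) * (x-a*y)) : ℤ × ℤ)
      ≠ (sg (x-b*y) * (x-b*y), sg (x+a*y) * (x+a*y)) := by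
  intro h
  rw [Prod.mk.injEq] at h
  obtain ⟨h1, -⟩ := h
  rcases sg_eq (x+b*y) with e1 | e1 <;> rcases sg_eq (x-b*y) with e2 | e2 <;>
    rw [e1, e2] at h1 <;> omega

private lemma mul_dvd8a {u v : ℤ} (h2 : (2:ℤ) ∣ u) (h4 : (4:ℤ) ∣ v) : (8:ℤ) ∣ u * v := by
  obtain ⟨w, hw⟩ := h2; obtain ⟨z, hz⟩ := h4
  exact ⟨w*z, by rw [hw, hz]; ring⟩

private lemma mul_dvd8b {u v : ℤ} (h4 : (4:ℤ) ∣ u) (h2 : (2:ℤ) ∣ v) : (8:ℤ) ∣ u * v := by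
  obtain ⟨w, hw⟩ := h4; obtain ⟨z, hz⟩ := h2
  exact ⟨w*z, by rw [hw, hz]; ring⟩

set_option maxHeartbeats 2000000 in

set_option maxHeartbeats 2000000 in
/-- `lam a b N` is λ(a, b; N+1): the finite sum of x·y over all integer pairs (x, y)
with x ≡ y ≡ 1 (mod 4) and a·x² + b·y² = 8N + a + b. -/
noncomputable def lam (a b N : ℤ) : ℤ :=
  ∑ᶠ xy ∈ {xy : ℤ × ℤ | xy.1 % 4 = 1 ∧ xy.2 % 4 = 1 ∧
      a * xy.1 ^ 2 + b * xy.2 ^ 2 = 8 * N + a + b}, xy.1 * xy.2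

set_option maxHeartbeats 2000000 in
theorem stmt3 (a b : ℤ) (ha : 0 < a) (hb : 0 < b) (hao : Odd a) (hbo : Odd b)
    (hcop : IsCoprime a b)
    (p : ℕ) (hp : p.Prime) (hpodd : Odd p)
    (hpab : (p : ℤ) ≠ a * b) (hpab1 : (p : ℤ) ≠ a * b + 1)
    (x y : ℤ) (hxy : (p : ℤ) = x ^ 2 + a * b * y ^ 2)
    (n : ℤ) (hn : n = (a + b) * ((p : ℤ) - 1) / 8) :
    (8 : ℤ) ∣ (a + b) * ((p : ℤ) - 1) ∧ 0 ≤ n ∧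
      (-1 : ℤ) ^ (((a * b + 1) / 2) * y).natAbs * (4 * x ^ 2 - 2 * (p : ℤ)) = lam a b n := by
  have hao2 : a % 2 = 1 := Int.odd_iff.mp hao
  have hbo2 : b % 2 = 1 := Int.odd_iff.mp hbo
  have hpp : Prime (p:ℤ) := Nat.prime_iff_prime_int.mp hp
  have hp2 : (2:ℤ) ≤ (p:ℤ) := by exact_mod_cast hp.two_le
  have hpo2 : (p:ℤ) % 2 = 1 := by
    have := Nat.odd_iff.mp hpodd; omega
  have habpos : 0 < a * b := mul_pos ha hb
  -- x ≠ 0 and y ≠ 0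
  have hy0 : y ≠ 0 := by
    rintro rfl
    have h0 : (p:ℤ) = x * x := by linear_combination hxy
    rcases hpp.irreducible.isUnit_or_isUnit h0 with h | h <;>
      rcases Int.isUnit_iff.mp h with h' | h' <;> rw [h'] at h0 <;> omega
  have hx0 : x ≠ 0 := by
    rintro rfl
    have h0 : (p:ℤ) = (a*b) * y^2 := by linear_combination hxy
    rcases hpp.irreducible.isUnit_or_isUnit h0 with h | h
    · rcases Int.isUnit_iff.mp h with h' | h'
      · rw [h'] at h0
        have h1 : (p:ℤ) = y * y := by linear_combination h0
        rcases hpp.irreducible.isUnit_or_isUnit h1 with h | h <;>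
          rcases Int.isUnit_iff.mp h with h'' | h'' <;> rw [h''] at h1 <;> omega
      · omega
    · rcases Int.isUnit_iff.mp h with h' | h'
      · have : (p:ℤ) = a * b := by rw [h'] at h0; linarith
        exact hpab this
      · nlinarith [sq_nonneg y]
  have hy1 : 1 ≤ y^2 := by
    have := Int.one_le_abs hy0; nlinarith [sq_abs y]
  have hx1 : 1 ≤ x^2 := by
    have := Int.one_le_abs hx0; nlinarith [sq_abs x]
  -- p does not divide a*b
  have hpab' : ¬ ((p:ℤ) ∣ a * b) := by
    intro hd
    have h1 : (p:ℤ) ∣ x^2 := by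
      have h2 : (p:ℤ) ∣ a*b*y^2 := hd.mul_right _
      have h3 : x^2 = (p:ℤ) - a*b*y^2 := by linarith
      rw [h3]; exact dvd_sub dvd_rfl h2
    have h4 : (p:ℤ) ∣ x := hpp.dvd_of_dvd_pow h1
    have h5 : (p:ℤ) ≤ |x| := Int.le_of_dvd (abs_pos.mpr hx0) ((dvd_abs _ _).mpr h4)
    have h6 : (p:ℤ)^2 ≤ x^2 := by nlinarith [sq_abs x]
    nlinarith [mul_le_mul_of_nonneg_right (le_of_lt habpos) (le_of_lt (lt_of_lt_of_le zero_lt_one hy1))]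
  have hpa : ¬ ((p:ℤ) ∣ a) := fun h => hpab' (h.mul_right b)
  -- parity facts
  have hxsq : x^2 % 2 = x % 2 := by
    obtain ⟨k, hk⟩ := Int.even_mul_succ_self x
    have hx2 : x^2 + x = 2*k := by linear_combination hk
    omega
  have hysq : y^2 % 2 = y % 2 := by
    obtain ⟨k, hk⟩ := Int.even_mul_succ_self y
    have hy2 : y^2 + y = 2*k := by linear_combination hk
    omega
  have habodd : (a*b) % 2 = 1 := by have := oddmul hao2 b; omega
  obtain ⟨c, hc⟩ : ∃ c, a*b = 2*c + 1 := ⟨(a*b)/2, by omega⟩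
  have haby : a*b*y^2 = 2*(c*y^2) + y^2 := by rw [hc]; ring
  have hxyodd : (x + y) % 2 = 1 := by omega
  -- 8 divides (a+b)(p-1)
  have hab4 : (a-1)*(b-1) % 4 = 0 := by
    obtain ⟨u, hu⟩ : ∃ u, a = 2*u+1 := ⟨a/2, by omega⟩
    obtain ⟨v, hv⟩ : ∃ v, b = 2*v+1 := ⟨b/2, by omega⟩
    have : (a-1)*(b-1) = 4*(u*v) := by rw [hu, hv]; ring
    omega
  have habid : (a-1)*(b-1) = a*b - a - b + 1 := by ring
  have hdvd8 : (8:ℤ) ∣ (a + b) * ((p:ℤ) - 1) := by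
    rcases Int.even_or_odd y with hy | hy
    · -- y even, x odd
      obtain ⟨t, ht⟩ := hy
      have hxodd : x % 2 = 1 := by omega
      have hx8 := odd_sq hxodd
      have h4y : a*b*y^2 = 4*(a*b*(t*t)) := by rw [ht]; ring
      exact mul_dvd8a (by omega) (by omega)
    · -- y odd, x even
      have hyodd : y % 2 = 1 := Int.odd_iff.mp hy
      have hxev : x % 2 = 0 := by omega
      obtain ⟨ξ, hξ⟩ : ∃ ξ, x = 2*ξ := ⟨x/2, by omega⟩
      have hx4 : x^2 = 4*(ξ*ξ) := by rw [hξ]; ring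
      have hy8 := odd_sq hyodd
      obtain ⟨w, hw⟩ : ∃ w, y^2 - 1 = 8*w := ⟨(y^2-1)/8, by omega⟩
      have habmod : a*b*y^2 = 8*(a*b*w) + a*b := by linear_combination (a*b)*hw
      by_cases h4 : (a*b) % 4 = 1
      · exact mul_dvd8a (by omega) (by omega)
      · exact mul_dvd8b (by omega) (by omega)
  have h8n : 8 * n = (a+b) * ((p:ℤ) - 1) := by rw [hn]; exact Int.mul_ediv_cancel' hdvd8
  have hn0 : 0 ≤ n := by
    have : 0 ≤ (a+b) * ((p:ℤ)-1) := mul_nonneg (by linarith) (by linarith)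
    omega
  have hM : 8 * n + a + b = (a+b) * (p:ℤ) := by linear_combination h8n
  refine ⟨hdvd8, hn0, ?_⟩
  -- the four candidate coordinates
  have oX0 : (x + b*y) % 2 = 1 := by have := oddmul hbo2 y; omega
  have oY0 : (x - a*y) % 2 = 1 := by have := oddmul hao2 y; omega
  have oX1 : (x - b*y) % 2 = 1 := by have := oddmul hbo2 y; omega
  have oY1 : (x + a*y) % 2 = 1 := by have := oddmul hao2 y; omega
  have hby0 : b*y ≠ 0 := mul_ne_zero (by omega) hy0
  have hxyodd2 : (x + -y) % 2 = 1 := by omega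
  have hne := pair_ne (a := a) hx0 hby0
  -- the solution set
  have hS : {xy : ℤ × ℤ | xy.1 % 4 = 1 ∧ xy.2 % 4 = 1 ∧
      a * xy.1 ^ 2 + b * xy.2 ^ 2 = 8 * n + a + b}
      = {(sg (x+b*y) * (x+b*y), sg (x-a*y) * (x-a*y)),
         (sg (x-b*y) * (x-b*y), sg (x+a*y) * (x+a*y))} := by
    ext ⟨X, Y⟩
    simp only [Set.mem_setOf_eq, Set.mem_insert_iff, Set.mem_singleton_iff, Prod.mk.injEq]
    constructor
    · rintro ⟨h1, h2, h3⟩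
      have hXY : a * X^2 + b * Y^2 = (a+b) * (p:ℤ) := by
        rw [← hM]; linear_combination h3
      have hX2 : X % 2 = 1 := by omega
      have hY2 : Y % 2 = 1 := by omega
      have hdd : (p:ℤ) ∣ (x*Y - a*y*X) * (x*Y + a*y*X) :=
        ⟨Y^2 - a*y^2*(a+b), by linear_combination (- Y^2) * hxy - a*y^2 * hXY⟩
      rcases hpp.dvd_mul.mp hdd with hc | hc
      · obtain ⟨s, t, hs, ht, hXe, hYe⟩ := core ha hb hp hpa hao2 hbo2 hxy hXY hX2 hY2 hxyodd hc
        rcases hs with rfl | rfl <;> rcases ht with rfl | rfl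
        · -- s=1 t=1 : family 1
          right
          exact ⟨(sg_eq_of oX1 (Or.inl rfl) (by rw [hXe]; ring) h1).symm,
                 (sg_eq_of oY1 (Or.inl rfl) (by rw [hYe]; ring) h2).symm⟩
        · -- s=1 t=-1 : family 0, signs (1, -1)
          left
          exact ⟨(sg_eq_of oX0 (Or.inl rfl) (by rw [hXe]; ring) h1).symm,
                 (sg_eq_of oY0 (Or.inr rfl) (by rw [hYe]; ring) h2).symm⟩
        · -- s=-1 t=1 : family 0, signs (-1, 1)
          left
          exact ⟨(sg_eq_of oX0 (Or.inr rfl) (by rw [hXe]; ring) h1).symm,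
                 (sg_eq_of oY0 (Or.inl rfl) (by rw [hYe]; ring) h2).symm⟩
        · -- s=-1 t=-1 : family 1, signs (-1,-1)
          right
          exact ⟨(sg_eq_of oX1 (Or.inr rfl) (by rw [hXe]; ring) h1).symm,
                 (sg_eq_of oY1 (Or.inr rfl) (by rw [hYe]; ring) h2).symm⟩
      · -- apply core with y := -y
        have hxy' : (p:ℤ) = x^2 + a*b*(-y)^2 := by linear_combination hxy
        have hxyodd' : (x + -y) % 2 = 1 := by omega
        have hc' : (p:ℤ) ∣ (x*Y - a*(-y)*X) := by
          have e : x*Y - a*(-y)*X = x*Y + a*y*X := by ring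
          rw [e]; exact hc
        obtain ⟨s, t, hs, ht, hXe, hYe⟩ := core ha hb hp hpa hao2 hbo2 hxy' hXY hX2 hY2 hxyodd' hc'
        rcases hs with rfl | rfl <;> rcases ht with rfl | rfl
        · -- s=1 t=1 : X = x + b*y, Y = -a*y + x : family 0 signs (1,1)
          left
          exact ⟨(sg_eq_of oX0 (Or.inl rfl) (by rw [hXe]; ring) h1).symm,
                 (sg_eq_of oY0 (Or.inl rfl) (by rw [hYe]; ring) h2).symm⟩
        · -- s=1 t=-1 : X = x - b*y? X = 1*x - b*(-1*-y) = x - b*y ; Y = -a*y - x : family 1 signs (1,-1)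
          right
          exact ⟨(sg_eq_of oX1 (Or.inl rfl) (by rw [hXe]; ring) h1).symm,
                 (sg_eq_of oY1 (Or.inr rfl) (by rw [hYe]; ring) h2).symm⟩
        · -- s=-1 t=1 : X = -x - b*(-y)... = -(x+... let ring decide; family 1 (-1, 1)
          right
          exact ⟨(sg_eq_of oX1 (Or.inr rfl) (by rw [hXe]; ring) h1).symm,
                 (sg_eq_of oY1 (Or.inl rfl) (by rw [hYe]; ring) h2).symm⟩
        · -- s=-1 t=-1 : family 0 (-1,-1)
          left
          exact ⟨(sg_eq_of oX0 (Or.inr rfl) (by rw [hXe]; ring) h1).symm,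
                 (sg_eq_of oY0 (Or.inr rfl) (by rw [hYe]; ring) h2).symm⟩
    · rintro (⟨hX, hY⟩ | ⟨hX, hY⟩) <;> subst hX <;> subst hY <;>
        refine ⟨sg_spec (by assumption), sg_spec (by assumption), ?_⟩
      · rw [mul_pow, mul_pow, sg_sq, sg_sq, one_mul, one_mul, hM]
        linear_combination (-(a+b)) * hxy
      · rw [mul_pow, mul_pow, sg_sq, sg_sq, one_mul, one_mul, hM]
        linear_combination (-(a+b)) * hxy
  show _ = lam a b n
  unfold lam
  rw [hS, finsum_mem_pair hne]
  have key0 := sign_key hao2 hbo2 hxyodd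
  have key1 : sg (x - b*y) * sg (x + a*y) = (-1 : ℤ) ^ (((a*b+1)/2) * y).natAbs := by
    have e1 : x - b*y = x + b*(-y) := by ring
    have e2 : x + a*y = x - a*(-y) := by ring
    have h := sign_key hao2 hbo2 hxyodd2
    rw [e1, e2, h, mul_neg, Int.natAbs_neg]
  have h0 : (sg (x+b*y) * (x+b*y)) * (sg (x-a*y) * (x-a*y))
      = (-1 : ℤ) ^ (((a*b+1)/2) * y).natAbs * ((x+b*y)*(x-a*y)) := by
    rw [← key0]; ring
  have h1 : (sg (x-b*y) * (x-b*y)) * (sg (x+a*y) * (x+a*y))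
      = (-1 : ℤ) ^ (((a*b+1)/2) * y).natAbs * ((x-b*y)*(x+a*y)) := by
    rw [← key1]; ring
  rw [h0, h1]
  linear_combination (-2 * (-1 : ℤ) ^ (((a*b+1)/2) * y).natAbs) * hxy
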